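/- Under the two-element tensor-product SBP–SAT setting, assume M_Γ is symmetric positive semidefinite and σ ≥ 0 (no accuracy conditions on R_L^{1D}, R_R^{1D} are required). Let u_L(t), u_R(t) be differentiable curves solving the semi-discrete scheme. Then the time derivative of the total discrete energy satisfies the exact identity J_L u_Lᵀ H_L u_L'(t) + J_R u_Rᵀ H_R u_R'(t) = (λ/2)( u_Lᵀ E_{ξ1,L} u_L − u_Rᵀ E_{ξN,R} u_R ) − (λ_η/2)( u_Lᵀ (E_{ηN,L} − E_{η1,L}) u_L + u_Rᵀ (E_{ηN,R} − E_{η1,R}) u_R ) − (σ|λ|/2) (R_L u_L − R_R u_R)ᵀ M_Γ (R_L u_L − R_R u_R). In particular, the interface/SAT contribution −(σ|λ|/2)(R_L u_L − R_R u_R)ᵀ M_Γ (R_L u_L − R_R u_R) is ≤ 0, so the non-conforming coupling is energy stable, and for the central flux σ = 0 it contributes exactly zero (energy conservation at the interface). -/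

import Mathlib

open Matrix
open scoped Kronecker

noncomputable section

/-- Boundary matrix `e_i e_iᵀ` built from the `i`-th standard basis vector. -/
def bmat {n : ℕ} (i : Fin n) : Matrix (Fin n) (Fin n) ℝ :=
  vecMulVec (Pi.single i 1) (Pi.single i 1)

/-- Two-dimensional projection `e_iᵀ ⊗ R1` onto the intermediate interface grid:
it restricts the solution to the face `ξ`-index `i` and applies the
one-dimensional projection `R1`. -/
def proj2D {nx ny NΓ : ℕ} (i : Fin nx) (R1 : Matrix (Fin NΓ) (Fin ny) ℝ) :
    Matrix (Fin NΓ) (Fin nx × Fin ny) ℝ :=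
  Matrix.of fun g q => (if q.1 = i then 1 else 0) * R1 g q.2


section helpers

open Matrix

private lemma dot_tp {m n : Type*} [Fintype m] [Fintype n]
    (A : Matrix m n ℝ) (u : n → ℝ) (v : m → ℝ) :
    u ⬝ᵥ (Aᵀ *ᵥ v) = (A *ᵥ u) ⬝ᵥ v := by
  rw [Matrix.dotProduct_mulVec, Matrix.vecMul_transpose]

private lemma quad_tp {n : Type*} [Fintype n] (A : Matrix n n ℝ) (u : n → ℝ) :
    u ⬝ᵥ (Aᵀ *ᵥ u) = u ⬝ᵥ (A *ᵥ u) := by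
  rw [dot_tp, dotProduct_comm]

private lemma quad_half {n : Type*} [Fintype n] (A E1 E2 : Matrix n n ℝ)
    (h : A + Aᵀ = E2 - E1) (u : n → ℝ) :
    2 * (u ⬝ᵥ (A *ᵥ u)) = u ⬝ᵥ (E2 *ᵥ u) - u ⬝ᵥ (E1 *ᵥ u) := by
  have h2 := congrArg (fun M : Matrix n n ℝ => u ⬝ᵥ (M *ᵥ u)) h
  simp only [Matrix.add_mulVec, Matrix.sub_mulVec, dotProduct_add,
    dotProduct_sub, quad_tp] at h2
  linarith

private lemma kron_sym_left {m n : ℕ} (Q E1 E2 : Matrix (Fin m) (Fin m) ℝ)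
    (H : Matrix (Fin n) (Fin n) ℝ) (hH : H.IsSymm) (hQ : Q + Qᵀ = E2 - E1) :
    (Q ⊗ₖ H) + (Q ⊗ₖ H)ᵀ = E2 ⊗ₖ H - E1 ⊗ₖ H := by
  have ht : (Q ⊗ₖ H)ᵀ = Qᵀ ⊗ₖ H := by
    rw [← Matrix.kroneckerMap_transpose, hH.eq]
  rw [ht, ← Matrix.add_kronecker, hQ]
  ext ⟨i1, i2⟩ ⟨j1, j2⟩
  simp [Matrix.kroneckerMap_apply, Matrix.sub_apply, sub_mul]

private lemma kron_sym_right {m n : ℕ} (Q E1 E2 : Matrix (Fin n) (Fin n) ℝ)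
    (H : Matrix (Fin m) (Fin m) ℝ) (hH : H.IsSymm) (hQ : Q + Qᵀ = E2 - E1) :
    (H ⊗ₖ Q) + (H ⊗ₖ Q)ᵀ = H ⊗ₖ E2 - H ⊗ₖ E1 := by
  have ht : (H ⊗ₖ Q)ᵀ = H ⊗ₖ Qᵀ := by
    rw [← Matrix.kroneckerMap_transpose, hH.eq]
  rw [ht, ← Matrix.kronecker_add, hQ]
  ext ⟨i1, i2⟩ ⟨j1, j2⟩
  simp [Matrix.kroneckerMap_apply, Matrix.sub_apply, mul_sub]

end helpers

/-- **Energy stability of the non-conforming SBP–SAT coupling.**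
In the two-element tensor-product SBP–SAT setting, with `M_Γ` symmetric
positive semidefinite and `σ ≥ 0`, the time derivative of the total discrete
energy equals the outer-boundary terms minus the nonnegative interface
dissipation `(σ|λ|/2)(R_L u_L − R_R u_R)ᵀ M_Γ (R_L u_L − R_R u_R)`; in
particular the interface/SAT contribution is `≤ 0` (energy stability) and
vanishes for the central flux `σ = 0` (energy conservation). -/
theorem nonconforming_energy_stability
    {nxL nyL nxR nyR NΓ : ℕ}
    -- one-dimensional SBP operators on each element
    (HxL : Matrix (Fin (nxL + 1)) (Fin (nxL + 1)) ℝ)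
    (HyL : Matrix (Fin (nyL + 1)) (Fin (nyL + 1)) ℝ)
    (HxR : Matrix (Fin (nxR + 1)) (Fin (nxR + 1)) ℝ)
    (HyR : Matrix (Fin (nyR + 1)) (Fin (nyR + 1)) ℝ)
    (QxL : Matrix (Fin (nxL + 1)) (Fin (nxL + 1)) ℝ)
    (QyL : Matrix (Fin (nyL + 1)) (Fin (nyL + 1)) ℝ)
    (QxR : Matrix (Fin (nxR + 1)) (Fin (nxR + 1)) ℝ)
    (QyR : Matrix (Fin (nyR + 1)) (Fin (nyR + 1)) ℝ)
    (hHxLd : HxL.IsDiag) (hHxLp : ∀ i, 0 < HxL i i)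
    (hHyLd : HyL.IsDiag) (hHyLp : ∀ i, 0 < HyL i i)
    (hHxRd : HxR.IsDiag) (hHxRp : ∀ i, 0 < HxR i i)
    (hHyRd : HyR.IsDiag) (hHyRp : ∀ i, 0 < HyR i i)
    (hQxL : QxL + QxLᵀ = bmat (Fin.last nxL) - bmat 0)
    (hQyL : QyL + QyLᵀ = bmat (Fin.last nyL) - bmat 0)
    (hQxR : QxR + QxRᵀ = bmat (Fin.last nxR) - bmat 0)
    (hQyR : QyR + QyRᵀ = bmat (Fin.last nyR) - bmat 0)
    (hQxL1 : QxL *ᵥ (fun _ => (1:ℝ)) = 0) (hQyL1 : QyL *ᵥ (fun _ => (1:ℝ)) = 0)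
    (hQxR1 : QxR *ᵥ (fun _ => (1:ℝ)) = 0) (hQyR1 : QyR *ᵥ (fun _ => (1:ℝ)) = 0)
    -- intermediate interface grid
    (MΓ : Matrix (Fin NΓ) (Fin NΓ) ℝ) (hMΓ : MΓ.PosSemidef)
    (RL1 : Matrix (Fin NΓ) (Fin (nyL + 1)) ℝ)
    (RR1 : Matrix (Fin NΓ) (Fin (nyR + 1)) ℝ)
    -- two-dimensional operators as Kronecker products
    (HL : Matrix (Fin (nxL + 1) × Fin (nyL + 1)) (Fin (nxL + 1) × Fin (nyL + 1)) ℝ)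
    (hHL : HL = HxL ⊗ₖ HyL)
    (QξL : Matrix (Fin (nxL + 1) × Fin (nyL + 1)) (Fin (nxL + 1) × Fin (nyL + 1)) ℝ)
    (hQξL : QξL = QxL ⊗ₖ HyL)
    (QηL : Matrix (Fin (nxL + 1) × Fin (nyL + 1)) (Fin (nxL + 1) × Fin (nyL + 1)) ℝ)
    (hQηL : QηL = HxL ⊗ₖ QyL)
    (ExNL : Matrix (Fin (nxL + 1) × Fin (nyL + 1)) (Fin (nxL + 1) × Fin (nyL + 1)) ℝ)
    (hExNL : ExNL = bmat (Fin.last nxL) ⊗ₖ HyL)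
    (Ex1L : Matrix (Fin (nxL + 1) × Fin (nyL + 1)) (Fin (nxL + 1) × Fin (nyL + 1)) ℝ)
    (hEx1L : Ex1L = bmat 0 ⊗ₖ HyL)
    (EyNL : Matrix (Fin (nxL + 1) × Fin (nyL + 1)) (Fin (nxL + 1) × Fin (nyL + 1)) ℝ)
    (hEyNL : EyNL = HxL ⊗ₖ bmat (Fin.last nyL))
    (Ey1L : Matrix (Fin (nxL + 1) × Fin (nyL + 1)) (Fin (nxL + 1) × Fin (nyL + 1)) ℝ)
    (hEy1L : Ey1L = HxL ⊗ₖ bmat 0)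
    (HR : Matrix (Fin (nxR + 1) × Fin (nyR + 1)) (Fin (nxR + 1) × Fin (nyR + 1)) ℝ)
    (hHR : HR = HxR ⊗ₖ HyR)
    (QξR : Matrix (Fin (nxR + 1) × Fin (nyR + 1)) (Fin (nxR + 1) × Fin (nyR + 1)) ℝ)
    (hQξR : QξR = QxR ⊗ₖ HyR)
    (QηR : Matrix (Fin (nxR + 1) × Fin (nyR + 1)) (Fin (nxR + 1) × Fin (nyR + 1)) ℝ)
    (hQηR : QηR = HxR ⊗ₖ QyR)
    (ExNR : Matrix (Fin (nxR + 1) × Fin (nyR + 1)) (Fin (nxR + 1) × Fin (nyR + 1)) ℝ)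
    (hExNR : ExNR = bmat (Fin.last nxR) ⊗ₖ HyR)
    (Ex1R : Matrix (Fin (nxR + 1) × Fin (nyR + 1)) (Fin (nxR + 1) × Fin (nyR + 1)) ℝ)
    (hEx1R : Ex1R = bmat 0 ⊗ₖ HyR)
    (EyNR : Matrix (Fin (nxR + 1) × Fin (nyR + 1)) (Fin (nxR + 1) × Fin (nyR + 1)) ℝ)
    (hEyNR : EyNR = HxR ⊗ₖ bmat (Fin.last nyR))
    (Ey1R : Matrix (Fin (nxR + 1) × Fin (nyR + 1)) (Fin (nxR + 1) × Fin (nyR + 1)) ℝ)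
    (hEy1R : Ey1R = HxR ⊗ₖ bmat 0)
    -- two-dimensional projections onto the interface grid
    (RL : Matrix (Fin NΓ) (Fin (nxL + 1) × Fin (nyL + 1)) ℝ)
    (hRL : RL = proj2D (Fin.last nxL) RL1)
    (RR : Matrix (Fin NΓ) (Fin (nxR + 1) × Fin (nyR + 1)) ℝ)
    (hRR : RR = proj2D 0 RR1)
    -- wave speeds, SAT parameter, Jacobians
    (lam lamEta σ JL JR : ℝ) (hσ : 0 ≤ σ) (hJL : 0 < JL) (hJR : 0 < JR)
    -- solution curves and numerical fluxes
    (uL uL' : ℝ → Fin (nxL + 1) × Fin (nyL + 1) → ℝ)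
    (uR uR' : ℝ → Fin (nxR + 1) × Fin (nyR + 1) → ℝ)
    (huL : ∀ t, HasDerivAt uL (uL' t) t)
    (huR : ∀ t, HasDerivAt uR (uR' t) t)
    (fL : ℝ → Fin (nxL + 1) × Fin (nyL + 1) → ℝ)
    (fR : ℝ → Fin (nxR + 1) × Fin (nyR + 1) → ℝ)
    (hfL : ∀ t, fL t =
      (lam / 2) • (ExNL *ᵥ uL t + RLᵀ *ᵥ (MΓ *ᵥ (RR *ᵥ uR t)))
        - (σ * |lam| / 2) • (RLᵀ *ᵥ (MΓ *ᵥ (RR *ᵥ uR t)) - RLᵀ *ᵥ (MΓ *ᵥ (RL *ᵥ uL t))))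
    (hfR : ∀ t, fR t =
      (lam / 2) • (Ex1R *ᵥ uR t + RRᵀ *ᵥ (MΓ *ᵥ (RL *ᵥ uL t)))
        - (σ * |lam| / 2) • (RRᵀ *ᵥ (MΓ *ᵥ (RR *ᵥ uR t)) - RRᵀ *ᵥ (MΓ *ᵥ (RL *ᵥ uL t))))
    -- the semi-discrete SBP–SAT scheme
    (hschemeL : ∀ t, JL • (HL *ᵥ uL' t) =
      -(lam • (QξL *ᵥ uL t)) - lamEta • (QηL *ᵥ uL t) + (lam • (ExNL *ᵥ uL t) - fL t))
    (hschemeR : ∀ t, JR • (HR *ᵥ uR' t) =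
      -(lam • (QξR *ᵥ uR t)) - lamEta • (QηR *ᵥ uR t) - (lam • (Ex1R *ᵥ uR t) - fR t)) :
    ∀ t : ℝ,
      (JL * (uL t ⬝ᵥ (HL *ᵥ uL' t)) + JR * (uR t ⬝ᵥ (HR *ᵥ uR' t)) =
        (lam / 2) * (uL t ⬝ᵥ (Ex1L *ᵥ uL t) - uR t ⬝ᵥ (ExNR *ᵥ uR t))
          - (lamEta / 2) * (uL t ⬝ᵥ ((EyNL - Ey1L) *ᵥ uL t)
              + uR t ⬝ᵥ ((EyNR - Ey1R) *ᵥ uR t))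
          - (σ * |lam| / 2) *
              ((RL *ᵥ uL t - RR *ᵥ uR t) ⬝ᵥ (MΓ *ᵥ (RL *ᵥ uL t - RR *ᵥ uR t))))
      ∧ (-((σ * |lam| / 2) *
            ((RL *ᵥ uL t - RR *ᵥ uR t) ⬝ᵥ (MΓ *ᵥ (RL *ᵥ uL t - RR *ᵥ uR t)))) ≤ 0)
      ∧ (σ = 0 →
          (σ * |lam| / 2) *
            ((RL *ᵥ uL t - RR *ᵥ uR t) ⬝ᵥ (MΓ *ᵥ (RL *ᵥ uL t - RR *ᵥ uR t))) = 0) := by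
  
  intro t
  have hMt : MΓᵀ = MΓ := by
    have h := hMΓ.1
    ext i j
    have := congrFun (congrFun h i) j
    simpa [Matrix.conjTranspose_apply] using this
  have hsym : ∀ (a b : Fin NΓ → ℝ), a ⬝ᵥ (MΓ *ᵥ b) = b ⬝ᵥ (MΓ *ᵥ a) := by
    intro a b
    calc a ⬝ᵥ (MΓ *ᵥ b) = a ⬝ᵥ (MΓᵀᵀ *ᵥ b) := by rw [Matrix.transpose_transpose]
      _ = (MΓᵀ *ᵥ a) ⬝ᵥ b := dot_tp _ _ _
      _ = (MΓ *ᵥ a) ⬝ᵥ b := by rw [hMt]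
      _ = b ⬝ᵥ (MΓ *ᵥ a) := dotProduct_comm _ _
  have hq1 : 2 * (uL t ⬝ᵥ (QξL *ᵥ uL t))
      = uL t ⬝ᵥ (ExNL *ᵥ uL t) - uL t ⬝ᵥ (Ex1L *ᵥ uL t) :=
    quad_half _ _ _ (by rw [hQξL, hExNL, hEx1L]; exact kron_sym_left _ _ _ _ hHyLd.isSymm hQxL) _
  have hq2 : 2 * (uL t ⬝ᵥ (QηL *ᵥ uL t))
      = uL t ⬝ᵥ (EyNL *ᵥ uL t) - uL t ⬝ᵥ (Ey1L *ᵥ uL t) :=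
    quad_half _ _ _ (by rw [hQηL, hEyNL, hEy1L]; exact kron_sym_right _ _ _ _ hHxLd.isSymm hQyL) _
  have hq3 : 2 * (uR t ⬝ᵥ (QξR *ᵥ uR t))
      = uR t ⬝ᵥ (ExNR *ᵥ uR t) - uR t ⬝ᵥ (Ex1R *ᵥ uR t) :=
    quad_half _ _ _ (by rw [hQξR, hExNR, hEx1R]; exact kron_sym_left _ _ _ _ hHyRd.isSymm hQxR) _
  have hq4 : 2 * (uR t ⬝ᵥ (QηR *ᵥ uR t))
      = uR t ⬝ᵥ (EyNR *ᵥ uR t) - uR t ⬝ᵥ (Ey1R *ᵥ uR t) :=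
    quad_half _ _ _ (by rw [hQηR, hEyNR, hEy1R]; exact kron_sym_right _ _ _ _ hHxRd.isSymm hQyR) _
  have hLe := congrArg (fun v => uL t ⬝ᵥ v) (hschemeL t)
  have hRe := congrArg (fun v => uR t ⬝ᵥ v) (hschemeR t)
  simp only [hfL t, hfR t, dotProduct_smul, smul_eq_mul, dotProduct_add,
    dotProduct_sub, dotProduct_neg, dot_tp] at hLe hRe
  have hcs : (RR *ᵥ uR t) ⬝ᵥ (MΓ *ᵥ (RL *ᵥ uL t)) = (RL *ᵥ uL t) ⬝ᵥ (MΓ *ᵥ (RR *ᵥ uR t)) :=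
    hsym _ _
  have hexp : (RL *ᵥ uL t - RR *ᵥ uR t) ⬝ᵥ (MΓ *ᵥ (RL *ᵥ uL t - RR *ᵥ uR t))
      = (RL *ᵥ uL t) ⬝ᵥ (MΓ *ᵥ (RL *ᵥ uL t))
        - 2 * ((RL *ᵥ uL t) ⬝ᵥ (MΓ *ᵥ (RR *ᵥ uR t)))
        + (RR *ᵥ uR t) ⬝ᵥ (MΓ *ᵥ (RR *ᵥ uR t)) := by
    simp only [Matrix.mulVec_sub, dotProduct_sub, sub_dotProduct]
    linarith [hcs]
  have hmain : JL * (uL t ⬝ᵥ (HL *ᵥ uL' t)) + JR * (uR t ⬝ᵥ (HR *ᵥ uR' t)) =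
      (lam / 2) * (uL t ⬝ᵥ (Ex1L *ᵥ uL t) - uR t ⬝ᵥ (ExNR *ᵥ uR t))
        - (lamEta / 2) * (uL t ⬝ᵥ ((EyNL - Ey1L) *ᵥ uL t)
            + uR t ⬝ᵥ ((EyNR - Ey1R) *ᵥ uR t))
        - (σ * |lam| / 2) *
            ((RL *ᵥ uL t - RR *ᵥ uR t) ⬝ᵥ (MΓ *ᵥ (RL *ᵥ uL t - RR *ᵥ uR t))) := by
    simp only [Matrix.sub_mulVec, dotProduct_sub]
    linear_combination hLe + hRe - (lam / 2) * hq1 - (lamEta / 2) * hq2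
      - (lam / 2) * hq3 - (lamEta / 2) * hq4 + (σ * |lam| / 2) * hexp
      + (lam / 2 + σ * |lam| / 2) * hcs
  have hpsd : 0 ≤ (RL *ᵥ uL t - RR *ᵥ uR t) ⬝ᵥ (MΓ *ᵥ (RL *ᵥ uL t - RR *ᵥ uR t)) := by
    have := hMΓ.dotProduct_mulVec_nonneg (RL *ᵥ uL t - RR *ᵥ uR t)
    simpa using this
  refine ⟨hmain, ?_, ?_⟩
  · have : 0 ≤ (σ * |lam| / 2) *
        ((RL *ᵥ uL t - RR *ᵥ uR t) ⬝ᵥ (MΓ *ᵥ (RL *ᵥ uL t - RR *ᵥ uR t))) := by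
      apply mul_nonneg _ hpsd
      positivity
    linarith
  · intro hσ0
    simp [hσ0]
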